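/- Let FC be a collection of dyadic cubes, and for each Q ∈ FC in generation k(Q) let n(Q) be the number of cubes in FC properly containing Q. Suppose for each Q ∈ FC and each R ∈ BTM with R ⊆ Q we have μ^{k(Q)}(R) < ℓ(R)^d / 2^{n(R) - n(Q)}, and μ^{k(Q)}(Q) = ℓ(Q)^d. Then ∑_{Q ∈ FC} ℓ(Q)^d ≤ ∑_{R ∈ BTM} ∑_{Q ∈ FC, Q ⊇ R} ℓ(R)^d / 2^{n(R) - n(Q)} ≤ 2 ∑_{R ∈ BTM} ℓ(R)^d. -/

import Mathlib

open Finset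

theorem frostmann_packing {α : Type*} [PartialOrder α]
    [DecidableRel ((· ≤ ·) : α → α → Prop)]
    (FC BTM : Finset α) (w : α → ℝ) (hw : ∀ a, 0 ≤ w a)
    (n : α → ℕ) (m : α → α → ℝ)
    -- μ^{k(Q)}(Q) = ℓ(Q)^d, and μ^{k(Q)} is carried by the BTM cubes inside Q
    (htot : ∀ Q ∈ FC, w Q ≤ ∑ R ∈ BTM.filter (fun R => R ≤ Q), m Q R)
    -- μ^{k(Q)}(R) < ℓ(R)^d / 2^{n(R)-n(Q)} for R ∈ BTM, R ⊆ Q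
    (hm : ∀ Q ∈ FC, ∀ R ∈ BTM, R ≤ Q → m Q R < w R / 2 ^ (n R - n Q))
    -- distinct FC-ancestors of a BTM cube have distinct n-values
    (hinj : ∀ R ∈ BTM, ∀ Q ∈ FC, ∀ Q' ∈ FC, R ≤ Q → R ≤ Q' → n Q = n Q' → Q = Q')
    -- and each such ancestor Q satisfies n(Q) < n(R)
    (hlt : ∀ R ∈ BTM, ∀ Q ∈ FC, R ≤ Q → n Q < n R) :
    (∑ Q ∈ FC, w Q ≤
        ∑ R ∈ BTM, ∑ Q ∈ FC.filter (fun Q => R ≤ Q), w R / 2 ^ (n R - n Q)) ∧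
      (∑ R ∈ BTM, ∑ Q ∈ FC.filter (fun Q => R ≤ Q), w R / 2 ^ (n R - n Q) ≤
        2 * ∑ R ∈ BTM, w R) := by
  constructor
  · calc ∑ Q ∈ FC, w Q
        ≤ ∑ Q ∈ FC, ∑ R ∈ BTM.filter (fun R => R ≤ Q), m Q R :=
          Finset.sum_le_sum fun Q hQ => htot Q hQ
      _ ≤ ∑ Q ∈ FC, ∑ R ∈ BTM.filter (fun R => R ≤ Q), w R / 2 ^ (n R - n Q) := by
          refine Finset.sum_le_sum fun Q hQ => Finset.sum_le_sum fun R hR => ?_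
          rw [Finset.mem_filter] at hR
          exact (hm Q hQ R hR.1 hR.2).le
      _ = ∑ R ∈ BTM, ∑ Q ∈ FC.filter (fun Q => R ≤ Q), w R / 2 ^ (n R - n Q) := by
          rw [Finset.sum_sigma', Finset.sum_sigma']
          apply Finset.sum_nbij' (fun p => ⟨p.2, p.1⟩) (fun p => ⟨p.2, p.1⟩) <;>
            simp_all [Finset.mem_sigma, Finset.mem_filter]
  · rw [two_mul, ← Finset.sum_add_distrib]
    refine Finset.sum_le_sum fun R hR => ?_
    have key : ∑ Q ∈ FC.filter (fun Q => R ≤ Q), w R / 2 ^ (n R - n Q)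
        ≤ ∑ j ∈ Finset.range (n R + 1), w R * (1/2 : ℝ) ^ j := by
      have : ∑ Q ∈ FC.filter (fun Q => R ≤ Q), w R / 2 ^ (n R - n Q)
          = ∑ j ∈ (FC.filter (fun Q => R ≤ Q)).image (fun Q => n R - n Q),
              w R * (1/2 : ℝ) ^ j := by
        rw [Finset.sum_image]
        · refine Finset.sum_congr rfl fun Q hQ => ?_
          rw [div_pow, one_pow, div_eq_mul_one_div]

        · intro Q hQ Q' hQ' h
          rw [Finset.mem_coe, Finset.mem_filter] at hQ hQ'
          have h1 := hlt R hR Q hQ.1 hQ.2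
          have h2 := hlt R hR Q' hQ'.1 hQ'.2
          exact hinj R hR Q hQ.1 Q' hQ'.1 hQ.2 hQ'.2 (by simp only at h; omega)
      rw [this]
      refine Finset.sum_le_sum_of_subset_of_nonneg ?_ ?_
      · intro j hj
        simp only [Finset.mem_image, Finset.mem_filter] at hj
        obtain ⟨Q, hQ, rfl⟩ := hj
        simp only [Finset.mem_range]
        omega
      · intro j _ _
        exact mul_nonneg (hw R) (by positivity)
    refine key.trans ?_
    rw [← Finset.mul_sum]
    calc w R * ∑ j ∈ Finset.range (n R + 1), (1/2 : ℝ) ^ j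
        ≤ w R * 2 := by
          refine mul_le_mul_of_nonneg_left ?_ (hw R)
          exact sum_geometric_two_le _
      _ ≤ w R + w R := by linarith [hw R]
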